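/- arXiv:2212.12041 — 2 statements merged into one kernel-verified Lean document; each statement's English description precedes it below -/
import Mathlib

section
/- Let Y ∈ ℝⁿ, and let the design matrix be partitioned as [W X] with W ∈ ℝ^{n×q}, X ∈ ℝ^{n×d}, and [W X] of full column rank. The ordinary least squares coefficient of X in the regression of Y on [W X] equals (XᵀMX)^{-1}XᵀMY, where M = I - W(WᵀW)^{-1}Wᵀ (Frisch–Waugh–Lovell theorem). -/
open Matrix

/-- Frisch–Waugh–Lovell: the OLS coefficient of `X` in the regression of `Y` on the
partitioned design `[W X]` equals `(XᵀMX)⁻¹ Xᵀ M Y`, where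
`M = I - W(WᵀW)⁻¹Wᵀ`. -/
theorem frisch_waugh_lovell {n q d : ℕ} (Y : Fin n → ℝ)
    (W : Matrix (Fin n) (Fin q) ℝ) (X : Matrix (Fin n) (Fin d) ℝ)
    (hrank : (Matrix.fromCols W X).rank = q + d) :
    let D := Matrix.fromCols W X
    let M := (1 : Matrix (Fin n) (Fin n) ℝ) - W * (Wᵀ * W)⁻¹ * Wᵀ
    ∀ j : Fin d,
      ((Dᵀ * D)⁻¹ *ᵥ (Dᵀ *ᵥ Y)) (Sum.inr j) =
      ((Xᵀ * M * X)⁻¹ *ᵥ (Xᵀ *ᵥ (M *ᵥ Y))) j := by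
  intro D M j
  -- D has trivial kernel
  have hDinj : ∀ v, D *ᵥ v = 0 → v = 0 := by
    intro v hv
    have hker : LinearMap.ker D.mulVecLin = ⊥ := by
      have h := LinearMap.finrank_range_add_finrank_ker D.mulVecLin
      have hdom : Module.finrank ℝ ((Fin q ⊕ Fin d) → ℝ) = q + d := by
        simp [Module.finrank_fintype_fun_eq_card]
      rw [hdom] at h
      have hr : Module.finrank ℝ (LinearMap.range D.mulVecLin) = q + d := hrank
      rw [hr] at h
      have : Module.finrank ℝ (LinearMap.ker D.mulVecLin) = 0 := by omega
      exact Submodule.finrank_eq_zero.mp this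
    have : D.mulVecLin v = 0 := hv
    simpa using (LinearMap.ker_eq_bot.mp hker) (by simpa using this)
  -- W has trivial kernel
  have hWinj : ∀ v, W *ᵥ v = 0 → v = 0 := by
    intro v hv
    have h : D *ᵥ (Sum.elim v 0) = 0 := by
      show Matrix.fromCols W X *ᵥ (Sum.elim v 0) = 0
      rw [Matrix.fromCols_mulVec_sumElim, hv]
      simp
    have := hDinj _ h
    ext i
    exact congrFun this (Sum.inl i)
  -- WᵀW is a unit
  have hA : IsUnit (Wᵀ * W) := by
    rw [← Matrix.mulVec_injective_iff_isUnit]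
    intro a b hab
    have hz : (Wᵀ * W) *ᵥ (a - b) = 0 := by
      rw [Matrix.mulVec_sub, hab, sub_self]
    have h0 : (W *ᵥ (a - b)) ⬝ᵥ (W *ᵥ (a - b)) = 0 := by
      have h1 : (a - b) ⬝ᵥ ((Wᵀ * W) *ᵥ (a - b)) = 0 := by rw [hz]; simp
      rw [← Matrix.mulVec_mulVec, Matrix.dotProduct_mulVec,
        Matrix.vecMul_transpose] at h1
      exact h1
    have := hWinj _ (dotProduct_self_eq_zero.mp h0)
    exact sub_eq_zero.mp this
  -- DᵀD is a unit
  have hDD : IsUnit (Dᵀ * D) := by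
    rw [← Matrix.mulVec_injective_iff_isUnit]
    intro a b hab
    have hz : (Dᵀ * D) *ᵥ (a - b) = 0 := by
      rw [Matrix.mulVec_sub, hab, sub_self]
    have h0 : (D *ᵥ (a - b)) ⬝ᵥ (D *ᵥ (a - b)) = 0 := by
      have h1 : (a - b) ⬝ᵥ ((Dᵀ * D) *ᵥ (a - b)) = 0 := by rw [hz]; simp
      rw [← Matrix.mulVec_mulVec, Matrix.dotProduct_mulVec,
        Matrix.vecMul_transpose] at h1
      exact h1
    have := hDinj _ (dotProduct_self_eq_zero.mp h0)
    exact sub_eq_zero.mp this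
  haveI iA : Invertible (Wᵀ * W) := hA.invertible
  have hAinv : ⅟(Wᵀ * W) = (Wᵀ * W)⁻¹ := invOf_eq_nonsing_inv _
  -- block structure of DᵀD
  have hblocks : Dᵀ * D =
      Matrix.fromBlocks (Wᵀ * W) (Wᵀ * X) (Xᵀ * W) (Xᵀ * X) := by
    show (Matrix.fromCols W X)ᵀ * (Matrix.fromCols W X) = _
    rw [Matrix.transpose_fromCols, Matrix.fromRows_mul_fromCols]
  -- the Schur complement is a unit
  have hS' : IsUnit (Xᵀ * X - Xᵀ * W * ⅟(Wᵀ * W) * (Wᵀ * X)) := by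
    rw [← Matrix.isUnit_fromBlocks_iff_of_invertible₁₁, ← hblocks]
    exact hDD
  haveI iS : Invertible (Xᵀ * X - Xᵀ * W * ⅟(Wᵀ * W) * (Wᵀ * X)) := hS'.invertible
  haveI iDD : Invertible (Dᵀ * D) := hDD.invertible
  haveI iblocks : Invertible
      (Matrix.fromBlocks (Wᵀ * W) (Wᵀ * X) (Xᵀ * W) (Xᵀ * X)) := by
    rw [← hblocks]; exact iDD
  -- explicit form of the block inverse, with `⁻¹` instead of `⅟`
  have h := Matrix.invOf_fromBlocks₁₁_eq (Wᵀ * W) (Wᵀ * X) (Xᵀ * W) (Xᵀ * X)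
  rw [invOf_eq_nonsing_inv (Matrix.fromBlocks (Wᵀ * W) (Wᵀ * X) (Xᵀ * W) (Xᵀ * X)),
    invOf_eq_nonsing_inv (Xᵀ * X - Xᵀ * W * ⅟(Wᵀ * W) * (Wᵀ * X)), hAinv] at h
  set S := Xᵀ * X - Xᵀ * W * (Wᵀ * W)⁻¹ * (Wᵀ * X) with hSdef
  -- XᵀMX equals the Schur complement
  have hXMX : Xᵀ * M * X = S := by
    show Xᵀ * ((1 : Matrix (Fin n) (Fin n) ℝ) - W * (Wᵀ * W)⁻¹ * Wᵀ) * X = S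
    rw [hSdef]
    simp only [Matrix.mul_sub, Matrix.sub_mul, Matrix.mul_one, Matrix.mul_assoc]
  -- DᵀY as a partitioned vector
  have hDY : Dᵀ *ᵥ Y = Sum.elim (Wᵀ *ᵥ Y) (Xᵀ *ᵥ Y) := by
    show (Matrix.fromCols W X)ᵀ *ᵥ Y = _
    rw [Matrix.transpose_fromCols, Matrix.fromRows_mulVec]
  have hinv : (Dᵀ * D)⁻¹ =
      Matrix.fromBlocks
        ((Wᵀ * W)⁻¹ + (Wᵀ * W)⁻¹ * (Wᵀ * X) * S⁻¹ * (Xᵀ * W) * (Wᵀ * W)⁻¹)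
        (-((Wᵀ * W)⁻¹ * (Wᵀ * X) * S⁻¹))
        (-(S⁻¹ * (Xᵀ * W) * (Wᵀ * W)⁻¹))
        (S⁻¹) := by
    rw [hblocks]; exact h
  rw [hinv, hDY, hXMX, Matrix.fromBlocks_mulVec]
  simp only [Sum.elim_inr, Sum.elim_comp_inl, Sum.elim_comp_inr]
  have key : -(S⁻¹ * (Xᵀ * W) * (Wᵀ * W)⁻¹) *ᵥ (Wᵀ *ᵥ Y) + S⁻¹ *ᵥ (Xᵀ *ᵥ Y)
      = S⁻¹ *ᵥ (Xᵀ *ᵥ (M *ᵥ Y)) := by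
    simp only [Matrix.mulVec_mulVec]
    rw [← Matrix.add_mulVec]
    have hmat : -(S⁻¹ * (Xᵀ * W) * (Wᵀ * W)⁻¹) * Wᵀ + S⁻¹ * Xᵀ
        = S⁻¹ * (Xᵀ * M) := by
      show _ = S⁻¹ * (Xᵀ * ((1 : Matrix (Fin n) (Fin n) ℝ) - W * (Wᵀ * W)⁻¹ * Wᵀ))
      simp only [Matrix.mul_sub, Matrix.mul_one, Matrix.neg_mul, Matrix.mul_assoc]
      abel
    rw [hmat]
  exact congrFun key j
end

section
/- In the Frisch–Waugh–Lovell decomposition, the OLS coefficient of W in the regression of Y on [W X] equals (WᵀW)^{-1}Wᵀ(Y - X β_x), where β_x = (XᵀMX)^{-1}XᵀMY and M = I - W(WᵀW)^{-1}Wᵀ. -/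
open Matrix

lemma aux_inj {m k : Type*} [Fintype m] [Fintype k] [DecidableEq m] (A : Matrix k m ℝ)
    (h : A.rank = Fintype.card m) : Function.Injective A.mulVec := by
  have h1 := A.mulVecLin.finrank_range_add_finrank_ker
  rw [Module.finrank_pi] at h1
  have hk : Module.finrank ℝ (LinearMap.ker A.mulVecLin) = 0 := by
    unfold Matrix.rank at h
    omega
  have : LinearMap.ker A.mulVecLin = ⊥ := Submodule.finrank_eq_zero.mp hk
  have := LinearMap.ker_eq_bot.mp this
  exact this

lemma aux_unit {m k : Type*} [Fintype m] [Fintype k] [DecidableEq m] (A : Matrix k m ℝ)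
    (h : Function.Injective A.mulVec) : IsUnit (Aᵀ * A) := by
  rw [← Matrix.mulVec_injective_iff_isUnit]
  intro u v huv
  apply h
  have h0 : (Aᵀ * A) *ᵥ (u - v) = 0 := by rw [Matrix.mulVec_sub, huv, sub_self]
  have hct : Aᴴ = Aᵀ := rfl
  rw [← hct, Matrix.conjTranspose_mul_self_mulVec_eq_zero, Matrix.mulVec_sub,
    sub_eq_zero] at h0
  exact h0

/-- Frisch–Waugh–Lovell: the OLS coefficient of `W` in the regression of `Y` on the
partitioned design `[W X]` equals `(WᵀW)⁻¹ Wᵀ (Y - X βₓ)`, where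
`βₓ = (XᵀMX)⁻¹ Xᵀ M Y` and `M = I - W(WᵀW)⁻¹Wᵀ`. -/
theorem frisch_waugh_lovell_w {n q d : ℕ} (Y : Fin n → ℝ)
    (W : Matrix (Fin n) (Fin q) ℝ) (X : Matrix (Fin n) (Fin d) ℝ)
    (hrank : (Matrix.fromCols W X).rank = q + d) :
    let D := Matrix.fromCols W X
    let M := (1 : Matrix (Fin n) (Fin n) ℝ) - W * (Wᵀ * W)⁻¹ * Wᵀ
    let βx := (Xᵀ * M * X)⁻¹ *ᵥ (Xᵀ *ᵥ (M *ᵥ Y))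
    ∀ i : Fin q,
      ((Dᵀ * D)⁻¹ *ᵥ (Dᵀ *ᵥ Y)) (Sum.inl i) =
      ((Wᵀ * W)⁻¹ *ᵥ (Wᵀ *ᵥ (Y - X *ᵥ βx))) i := by
  intro D M βx i
  have hDinj : Function.Injective D.mulVec := by
    apply aux_inj
    simpa using hrank
  have hWinj : Function.Injective W.mulVec := by
    intro u v huv
    have h1 : D *ᵥ (Sum.elim u 0) = D *ᵥ (Sum.elim v 0) := by
      simp only [D, Matrix.fromCols_mulVec_sumElim, Matrix.mulVec_zero, add_zero, huv]
    have := hDinj h1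
    funext j
    exact congrFun this (Sum.inl j)
  have hWW : IsUnit (Wᵀ * W) := aux_unit W hWinj
  have hWWdet : IsUnit (Wᵀ * W).det := (Matrix.isUnit_iff_isUnit_det _).mp hWW
  have hMW : M * W = 0 := by
    simp only [M, Matrix.sub_mul, Matrix.one_mul]
    rw [Matrix.mul_assoc (W * (Wᵀ * W)⁻¹), Matrix.mul_assoc W, Matrix.nonsing_inv_mul _ hWWdet,
      Matrix.mul_one, sub_self]
  have hMsymm : Mᵀ = M := by
    simp only [M, Matrix.transpose_sub, Matrix.transpose_one, Matrix.transpose_mul,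
      Matrix.transpose_transpose, Matrix.transpose_nonsing_inv, Matrix.transpose_mul,
      Matrix.transpose_transpose, Matrix.mul_assoc]
  have hMM : M * M = M := by
    have h2 : M * (W * (Wᵀ * W)⁻¹ * Wᵀ) = 0 := by
      rw [← Matrix.mul_assoc, ← Matrix.mul_assoc, hMW, Matrix.zero_mul, Matrix.zero_mul]
    calc M * M = M * 1 - M * (W * (Wᵀ * W)⁻¹ * Wᵀ) := by rw [← Matrix.mul_sub]
    _ = M := by rw [h2, Matrix.mul_one, sub_zero]
  have hfac : Xᵀ * M * X = (M * X)ᵀ * (M * X) := by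
    rw [Matrix.transpose_mul, hMsymm, Matrix.mul_assoc Xᵀ M (M * X),
      ← Matrix.mul_assoc M M X, hMM, ← Matrix.mul_assoc]
  have hMXinj : Function.Injective (M * X).mulVec := by
    intro u v huv
    have h0 : (M * X) *ᵥ (u - v) = 0 := by rw [Matrix.mulVec_sub, huv, sub_self]
    set w := u - v with hw
    have hXw : X *ᵥ w = (W * (Wᵀ * W)⁻¹ * Wᵀ * X) *ᵥ w := by
      simp only [M, Matrix.sub_mul, Matrix.one_mul, Matrix.sub_mulVec] at h0
      exact sub_eq_zero.mp h0
    set uu := ((Wᵀ * W)⁻¹ * Wᵀ * X) *ᵥ w with huu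
    have hWu : W *ᵥ uu = X *ᵥ w := by
      rw [hXw, huu]
      simp only [Matrix.mulVec_mulVec, Matrix.mul_assoc]
    have hD0 : D *ᵥ (Sum.elim (-uu) w) = D *ᵥ 0 := by
      rw [Matrix.mulVec_zero]
      simp only [D, Matrix.fromCols_mulVec_sumElim, Matrix.mulVec_neg, hWu, neg_add_cancel]
    have := hDinj hD0
    have hw0 : w = 0 := by
      funext j
      exact congrFun this (Sum.inr j)
    exact sub_eq_zero.mp hw0
  have hXMX : IsUnit (Xᵀ * M * X) := by
    rw [hfac]
    exact aux_unit (M * X) hMXinj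
  have hXMXdet : IsUnit (Xᵀ * M * X).det := (Matrix.isUnit_iff_isUnit_det _).mp hXMX
  have hDD : IsUnit (Dᵀ * D) := aux_unit D hDinj
  have hDDdet : IsUnit (Dᵀ * D).det := (Matrix.isUnit_iff_isUnit_det _).mp hDD
  set βw : Fin q → ℝ := (Wᵀ * W)⁻¹ *ᵥ (Wᵀ *ᵥ (Y - X *ᵥ βx)) with hβw
  set β : Fin q ⊕ Fin d → ℝ := Sum.elim βw βx with hβ
  have hXMXβ : (Xᵀ * M * X) *ᵥ βx = Xᵀ *ᵥ (M *ᵥ Y) := by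
    rw [show βx = (Xᵀ * M * X)⁻¹ *ᵥ (Xᵀ *ᵥ (M *ᵥ Y)) from rfl, Matrix.mulVec_mulVec,
      Matrix.mul_nonsing_inv _ hXMXdet, Matrix.one_mulVec]
  have hWβw : W *ᵥ βw = ((1 : Matrix (Fin n) (Fin n) ℝ) - M) *ᵥ (Y - X *ᵥ βx) := by
    have h3 : (1 : Matrix (Fin n) (Fin n) ℝ) - M = W * (Wᵀ * W)⁻¹ * Wᵀ := by
      simp [M]
    rw [h3, hβw]
    simp only [Matrix.mulVec_mulVec, Matrix.mul_assoc]
  have hWblock : Wᵀ *ᵥ (W *ᵥ βw + X *ᵥ βx) = Wᵀ *ᵥ Y := by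
    rw [Matrix.mulVec_add, hβw, Matrix.mulVec_mulVec, Matrix.mulVec_mulVec,
      Matrix.mul_nonsing_inv _ hWWdet, Matrix.one_mulVec, Matrix.mulVec_sub]
    abel
  have hMz : Xᵀ *ᵥ (M *ᵥ (Y - X *ᵥ βx)) = 0 := by
    rw [Matrix.mulVec_mulVec, Matrix.mulVec_sub, Matrix.mulVec_mulVec, hXMXβ,
      Matrix.mulVec_mulVec, sub_self]
  have hXblock : Xᵀ *ᵥ (W *ᵥ βw + X *ᵥ βx) = Xᵀ *ᵥ Y := by
    rw [Matrix.mulVec_add, hWβw, Matrix.sub_mulVec, Matrix.one_mulVec, Matrix.mulVec_sub,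
      hMz, sub_zero, Matrix.mulVec_sub]
    abel
  have hkey : (Dᵀ * D) *ᵥ β = Dᵀ *ᵥ Y := by
    rw [← Matrix.mulVec_mulVec]
    have hDβ : D *ᵥ β = W *ᵥ βw + X *ᵥ βx := by
      simp [D, hβ]
    have hDT : Dᵀ = Matrix.fromRows Wᵀ Xᵀ := by
      simp [D, Matrix.transpose_fromCols]
    rw [hDβ, hDT, Matrix.fromRows_mulVec, Matrix.fromRows_mulVec, hWblock, hXblock]
  have hfin : (Dᵀ * D)⁻¹ *ᵥ (Dᵀ *ᵥ Y) = β := by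
    rw [← hkey, Matrix.mulVec_mulVec, Matrix.nonsing_inv_mul _ hDDdet, Matrix.one_mulVec]
  rw [hfin]
  rfl
end
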